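/- arXiv:1510.02637 — 3 statements merged into one kernel-verified Lean document; each statement's English description precedes it below -/
import Mathlib

section
/- Let z be the maximal letter of Σ. Let x = y·c·u and x' = y·d·v, where c, d ∈ Σ with c < d, y and u are words over Σ, and v = z^(|u|). If x is self-minimal, then x' is self-minimal. -/
namespace Lyndon

variable {α : Type*}

/-- `rot w c` is the cyclic rotation of `w` obtained by moving its first `c mod |w|`
letters to the end. -/
def rot (w : List α) (c : ℕ) : List α :=
  w.drop (c % w.length) ++ w.take (c % w.length)

/-- `power w k` is the concatenation of `k` copies of `w`. -/
def power (w : List α) (k : ℕ) : List α := (List.replicate k w).flatten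

/-- `minrot w` is the lexicographically minimal cyclic rotation of `w`. -/
def minrot [LinearOrder α] (w : List α) : List α :=
  ((List.range w.length).map (rot w)).foldr min w

/-- A word is self-minimal if it equals its minimal cyclic rotation. -/
def SelfMinimal [LinearOrder α] (w : List α) : Prop := minrot w = w

/-- A word is primitive if it is a `k`-th power (for a positive integer `k`)
only of itself. -/
def Primitive (w : List α) : Prop :=
  ∀ (u : List α) (k : ℕ), 0 < k → w = power u k → u = w

/-- A Lyndon word is a nonempty word that is primitive and self-minimal. -/
def IsLyndon [LinearOrder α] (w : List α) : Prop :=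
  w ≠ [] ∧ Primitive w ∧ SelfMinimal w

/-- `Pref₋(w)`: the words `w_(i)·s` for `0 ≤ i ≤ n-1` and a letter `s < w[i+1]`,
together with `w` itself. -/
def PrefMinus [LinearOrder α] (w : List α) : Set (List α) :=
  {y | (∃ i : Fin w.length, ∃ s : α, s < w.get i ∧ y = w.take i ++ [s]) ∨ y = w}

/-- `L(w)`: the words containing a factor (contiguous subword) from `Pref₋(w)`. -/
def InL [LinearOrder α] (w x : List α) : Prop :=
  ∃ y ∈ PrefMinus w, y <:+: x

section Aux

variable [LinearOrder α]

lemma le_iff_lex {l l' : List α} : l ≤ l' ↔ l = l' ∨ List.Lex (· < ·) l l' := Iff.rfl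

lemma cons_le_iff {a b : α} {l l' : List α} :
    (a :: l) ≤ (b :: l') ↔ a < b ∨ (a = b ∧ l ≤ l') := by
  rw [le_iff_lex, le_iff_lex (l := l)]
  constructor
  · rintro (h | h)
    · injection h with h1 h2
      exact Or.inr ⟨h1, Or.inl h2⟩
    · rcases h with _ | h | h
      · exact Or.inl ‹_›
      · exact Or.inr ⟨rfl, Or.inr ‹_›⟩
  · rintro (h | ⟨rfl, (rfl | h)⟩)
    · exact Or.inr (List.Lex.rel h)
    · exact Or.inl rfl
    · exact Or.inr (List.Lex.cons h)

lemma le_of_head_lt {a b : α} {l l' : List α} (h : a < b) : (a :: l) ≤ (b :: l') :=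
  cons_le_iff.mpr (Or.inl h)

lemma head_le {a b : α} {l l' : List α} (h : (a :: l) ≤ (b :: l')) : a ≤ b := by
  rcases cons_le_iff.mp h with h | ⟨rfl, _⟩
  · exact h.le
  · exact le_rfl

lemma append_left_le {l l' : List α} (p : List α) (h : l ≤ l') : p ++ l ≤ p ++ l' := by
  rcases le_iff_lex.mp h with rfl | h
  · exact le_rfl
  · exact le_iff_lex.mpr (Or.inr (List.Lex.append_left _ h p))

lemma le_of_append_left_le {l l' : List α} {p : List α} (h : p ++ l ≤ p ++ l') : l ≤ l' := by
  induction p with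
  | nil => exact h
  | cons a p ih =>
    simp only [List.cons_append] at h
    rcases cons_le_iff.mp h with h' | ⟨_, h'⟩
    · exact absurd h' (lt_irrefl a)
    · exact ih h'

lemma le_of_ne_prefixes {s s' l l' m m' : List α} (hlen : s.length = s'.length)
    (hne : s ≠ s') (h : s ++ l ≤ s' ++ l') : s ++ m ≤ s' ++ m' := by
  induction s generalizing s' with
  | nil =>
    cases s' with
    | nil => exact absurd rfl hne
    | cons b t' => simp at hlen
  | cons a t ih =>
    cases s' with
    | nil => simp at hlen
    | cons b t' =>
      simp only [List.cons_append] at h ⊢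
      rcases cons_le_iff.mp h with hab | ⟨rfl, h'⟩
      · exact le_of_head_lt hab
      · have hne' : t ≠ t' := fun he => hne (by rw [he])
        have := ih (by simpa using hlen) hne' h'
        exact cons_le_iff.mpr (Or.inr ⟨rfl, this⟩)

lemma foldr_min_le {β : Type*} [LinearOrder β] (l : List β) (b : β) : l.foldr min b ≤ b := by
  induction l with
  | nil => exact le_rfl
  | cons a l ih => exact le_trans (min_le_right a (l.foldr min b)) ih

lemma foldr_min_eq {β : Type*} [LinearOrder β] (l : List β) (b : β) :
    l.foldr min b = b ↔ ∀ a ∈ l, b ≤ a := by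
  induction l with
  | nil => simp
  | cons a l ih =>
    simp only [List.foldr_cons, List.mem_cons]
    constructor
    · intro h
      have h1 : b ≤ a := by
        calc b = min a (l.foldr min b) := h.symm
          _ ≤ a := min_le_left _ _
      have h2 : l.foldr min b = b := by
        refine le_antisymm (foldr_min_le l b) ?_
        calc b = min a (l.foldr min b) := h.symm
          _ ≤ l.foldr min b := min_le_right _ _
      rintro x (rfl | hx)
      · exact h1
      · exact ih.mp h2 x hx
    · intro h
      rw [ih.mpr fun x hx => h x (Or.inr hx)]
      exact min_eq_right (h a (Or.inl rfl))

lemma selfMinimal_iff {w : List α} :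
    SelfMinimal w ↔ ∀ i < w.length, w ≤ rot w i := by
  rw [SelfMinimal, minrot, foldr_min_eq]
  simp

lemma case2_aux (y u v : List α) (c d : α) (hcd : c < d) (i : ℕ)
    (hpos : 0 < i) (hiy : i ≤ y.length)
    (key : y ++ ([c] ++ u) ≤ y.drop i ++ ([c] ++ (u ++ y.take i))) :
    y ++ ([d] ++ v) ≤ y.drop i ++ ([d] ++ (v ++ y.take i)) := by
  have htlt : y.length - i < y.length := by omega
  have hlen : (y.take (y.length - i)).length = (y.drop i).length := by
    simp [List.length_take, List.length_drop]
  have hy : y = y.take (y.length - i) ++ y.drop (y.length - i) :=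
    (List.take_append_drop _ y).symm
  by_cases heq : y.take (y.length - i) = y.drop i
  · -- same prefix; compare letter after it
    have hdt : y.drop (y.length - i) = y[y.length - i] :: y.drop (y.length - i + 1) :=
      List.drop_eq_getElem_cons htlt
    have key2 : y.drop (y.length - i) ++ ([c] ++ u) ≤ [c] ++ (u ++ y.take i) := by
      apply le_of_append_left_le (p := y.take (y.length - i))
      calc y.take (y.length - i) ++ (y.drop (y.length - i) ++ ([c] ++ u))
          = y ++ ([c] ++ u) := by conv_rhs => rw [hy, List.append_assoc]
        _ ≤ y.drop i ++ ([c] ++ (u ++ y.take i)) := key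
        _ = y.take (y.length - i) ++ ([c] ++ (u ++ y.take i)) := by rw [heq]
    rw [hdt] at key2
    simp only [List.cons_append] at key2
    have hle : y[y.length - i] ≤ c := head_le key2
    calc y ++ ([d] ++ v)
        = y.take (y.length - i) ++ (y.drop (y.length - i) ++ ([d] ++ v)) := by
          conv_lhs => rw [hy, List.append_assoc]
      _ ≤ y.take (y.length - i) ++ ([d] ++ (v ++ y.take i)) := by
          apply append_left_le
          rw [hdt]
          simp only [List.cons_append]
          exact le_of_head_lt (lt_of_le_of_lt hle hcd)
      _ = y.drop i ++ ([d] ++ (v ++ y.take i)) := by rw [heq]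
  · -- prefixes of equal length differ: decided before the changed letter
    have key2 : y.take (y.length - i) ++ (y.drop (y.length - i) ++ ([c] ++ u))
        ≤ y.drop i ++ ([c] ++ (u ++ y.take i)) := by
      calc y.take (y.length - i) ++ (y.drop (y.length - i) ++ ([c] ++ u))
          = y ++ ([c] ++ u) := by conv_rhs => rw [hy, List.append_assoc]
        _ ≤ _ := key
    have hfin := le_of_ne_prefixes hlen heq
      (m := y.drop (y.length - i) ++ ([d] ++ v)) (m' := [d] ++ (v ++ y.take i)) key2
    calc y ++ ([d] ++ v)
        = y.take (y.length - i) ++ (y.drop (y.length - i) ++ ([d] ++ v)) := by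
          conv_lhs => rw [hy, List.append_assoc]
      _ ≤ y.drop i ++ ([d] ++ (v ++ y.take i)) := hfin

end Aux

/-- Let `z` be the maximal letter. If `x = y·c·u` is self-minimal, `c < d` and
`v = z^{|u|}`, then `x' = y·d·v` is self-minimal. -/
theorem stmt_1 [LinearOrder α] [Fintype α] [Nonempty α]
    (z : α) (hz : ∀ a : α, a ≤ z)
    (x x' y u v : List α) (c d : α)
    (hx : x = y ++ [c] ++ u) (hx' : x' = y ++ [d] ++ v)
    (hcd : c < d) (hv : v = List.replicate u.length z)
    (hsm : SelfMinimal x) :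
    SelfMinimal x' := by
  subst hx hx' hv
  rw [selfMinimal_iff] at hsm ⊢
  have hlen' : (y ++ [d] ++ List.replicate u.length z).length
      = y.length + 1 + u.length := by simp; omega
  have hlen : (y ++ [c] ++ u).length = y.length + 1 + u.length := by simp; omega
  intro i hi
  rw [hlen'] at hi
  rw [rot, hlen', Nat.mod_eq_of_lt hi]
  rcases Nat.lt_or_ge i (y.length + 1) with h1 | h2
  · rcases Nat.eq_zero_or_pos i with rfl | hpos
    · simp
    · -- 1 ≤ i ≤ |y| : use self-minimality of x at rotation i
      have hiy : i ≤ y.length := by omega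
      have key := hsm i (by rw [hlen]; omega)
      rw [rot, hlen, Nat.mod_eq_of_lt (by omega : i < y.length + 1 + u.length)] at key
      have hd1 : (y ++ [c] ++ u).drop i = y.drop i ++ ([c] ++ u) := by
        rw [List.append_assoc, List.drop_append,
          Nat.sub_eq_zero_of_le hiy, List.drop_zero]
      have ht1 : (y ++ [c] ++ u).take i = y.take i := by
        rw [List.append_assoc, List.take_append,
          Nat.sub_eq_zero_of_le hiy, List.take_zero, List.append_nil]
      have hd2 : (y ++ [d] ++ List.replicate u.length z).drop i
          = y.drop i ++ ([d] ++ List.replicate u.length z) := by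
        rw [List.append_assoc, List.drop_append,
          Nat.sub_eq_zero_of_le hiy, List.drop_zero]
      have ht2 : (y ++ [d] ++ List.replicate u.length z).take i = y.take i := by
        rw [List.append_assoc, List.take_append,
          Nat.sub_eq_zero_of_le hiy, List.take_zero, List.append_nil]
      rw [hd1, ht1] at key
      rw [hd2, ht2]
      have key' : y ++ ([c] ++ u) ≤ y.drop i ++ ([c] ++ (u ++ y.take i)) := by
        calc y ++ ([c] ++ u) = y ++ [c] ++ u := by rw [List.append_assoc]
          _ ≤ y.drop i ++ ([c] ++ u) ++ y.take i := key
          _ = y.drop i ++ ([c] ++ (u ++ y.take i)) := by simp [List.append_assoc]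
      have goal' := case2_aux y u (List.replicate u.length z) c d hcd i hpos hiy key'
      calc y ++ [d] ++ List.replicate u.length z
          = y ++ ([d] ++ List.replicate u.length z) := by rw [List.append_assoc]
        _ ≤ y.drop i ++ ([d] ++ (List.replicate u.length z ++ y.take i)) := goal'
        _ = y.drop i ++ ([d] ++ List.replicate u.length z) ++ y.take i := by
            simp [List.append_assoc]
  · -- i > |y| : the rotation starts with the maximal letter z
    have hjm : i - (y.length + 1) < u.length := by omega
    have hd2 : (y ++ [d] ++ List.replicate u.length z).drop i
        = List.replicate (u.length - (i - (y.length + 1))) z := by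
      rw [List.drop_append, List.drop_of_length_le (by simp; omega),
        List.drop_replicate, List.nil_append]
      congr 1
      simp
    have ht2 : (y ++ [d] ++ List.replicate u.length z).take i
        = y ++ [d] ++ List.replicate (i - (y.length + 1)) z := by
      rw [List.take_append, List.take_of_length_le (by simp; omega),
        List.take_replicate]
      congr 2
      simp only [List.length_append, List.length_cons, List.length_nil]
      omega
    rw [hd2, ht2]
    have hrep : List.replicate (u.length - (i - (y.length + 1))) z
        = z :: List.replicate (u.length - (i - (y.length + 1)) - 1) z := by
      conv_lhs => rw [show u.length - (i - (y.length + 1))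
        = (u.length - (i - (y.length + 1)) - 1) + 1 by omega]
      rw [List.replicate_succ]
    cases y with
    | nil =>
      by_cases hdz : d = z
      · subst hdz
        apply le_of_eq
        have e1 : ([] : List α) ++ [d] ++ List.replicate u.length d
            = List.replicate (u.length + 1) d := by
          simp [List.replicate_succ]
        have e2 : List.replicate (u.length - (i - (List.length ([] : List α) + 1))) d
            ++ (([] : List α) ++ [d] ++ List.replicate (i - (List.length ([] : List α) + 1)) d)
            = List.replicate (u.length + 1) d := by
          simp only [List.nil_append]
          rw [show ([d] : List α) ++ List.replicate (i - (List.length ([] : List α) + 1)) d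
              = List.replicate ((i - (List.length ([] : List α) + 1)) + 1) d by
            simp [List.replicate_succ], ← List.replicate_add]
          congr 1
          simp at hjm h2 ⊢
          omega
        rw [e1, e2]
      · have hdlt : d < z := lt_of_le_of_ne (hz d) hdz
        rw [hrep]
        simp only [List.nil_append, List.cons_append]
        exact le_of_head_lt hdlt
    | cons a y₀ =>
      -- first letter of x (hence of x') is < z, since x is self-minimal and c < z
      have hax : a < z := by
        have key := hsm (a :: y₀).length (by rw [hlen]; omega)
        rw [rot, hlen,
          Nat.mod_eq_of_lt (by omega : (a :: y₀).length < (a :: y₀).length + 1 + u.length)]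
          at key
        have hd1 : ((a :: y₀) ++ [c] ++ u).drop (a :: y₀).length = [c] ++ u := by
          rw [List.append_assoc, List.drop_append,
            List.drop_of_length_le le_rfl, Nat.sub_self, List.drop_zero, List.nil_append]
        have ht1 : ((a :: y₀) ++ [c] ++ u).take (a :: y₀).length = a :: y₀ := by
          rw [List.append_assoc, List.take_append,
            List.take_of_length_le le_rfl, Nat.sub_self, List.take_zero, List.append_nil]
        rw [hd1, ht1] at key
        have key2 : a :: (y₀ ++ [c] ++ u) ≤ c :: (u ++ (a :: y₀)) := by
          calc a :: (y₀ ++ [c] ++ u) = (a :: y₀) ++ [c] ++ u := by simp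
            _ ≤ [c] ++ u ++ (a :: y₀) := key
            _ = c :: (u ++ (a :: y₀)) := by simp
        exact lt_of_le_of_lt (head_le key2) (lt_of_lt_of_le hcd (hz d))
      rw [hrep]
      have hsh : (a :: y₀) ++ [d] ++ List.replicate u.length z
          = a :: (y₀ ++ [d] ++ List.replicate u.length z) := by simp
      rw [hsh]
      exact le_of_head_lt hax

end Lyndon
end

section
/- For every word w of length n ≥ 1 over Σ, n · Lynd(w) equals the number of words x of length n over Σ such that x is primitive and minrot(x) ≤ w. -/
namespace Lyndon

variable {α : Type*}

/- ## auxiliary lemmas -/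

lemma rot_eq_rotate (w : List α) (c : ℕ) : rot w c = w.rotate c := by
  rcases eq_or_ne w [] with rfl | h
  · simp [rot]
  · have hlen : 0 < w.length := List.length_pos_iff.mpr h
    rw [rot, ← List.rotate_eq_drop_append_take (Nat.mod_lt _ hlen).le, List.rotate_mod]

@[simp] lemma power_zero (u : List α) : power u 0 = [] := by simp [power]

lemma power_succ (u : List α) (k : ℕ) : power u (k + 1) = u ++ power u k := by
  simp [power, List.replicate_succ]

lemma power_one (u : List α) : power u 1 = u := by simp [power_succ]

lemma power_add (u : List α) (a b : ℕ) :
    power u (a + b) = power u a ++ power u b := by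
  unfold power; rw [List.replicate_add, List.flatten_append]

lemma power_succ' (u : List α) (k : ℕ) : power u (k + 1) = power u k ++ u := by
  rw [power_add, power_one]

lemma length_power (u : List α) (k : ℕ) : (power u k).length = k * u.length := by
  induction k with
  | zero => simp
  | succ k ih => rw [power_succ, List.length_append, ih]; ring

/-- If two lists commute, they are powers of a common word. -/
lemma comm_pow : ∀ N : ℕ, ∀ s t : List α, s.length + t.length ≤ N →
    s ++ t = t ++ s → ∃ u k m, s = power u k ∧ t = power u m := by
  intro N
  induction N using Nat.strong_induction_on with
  | _ N ih =>
    intro s t hN hc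
    rcases eq_or_ne s [] with rfl | hs
    · exact ⟨t, 0, 1, by simp, (power_one t).symm⟩
    rcases eq_or_ne t [] with rfl | ht
    · exact ⟨s, 1, 0, (power_one s).symm, by simp⟩
    have hs0 : 0 < s.length := List.length_pos_iff.mpr hs
    have ht0 : 0 < t.length := List.length_pos_iff.mpr ht
    rcases le_or_gt s.length t.length with hle | hlt
    · -- s is a prefix of t
      have hst : s = t.take s.length := by
        have := congrArg (List.take s.length) hc
        rwa [List.take_left, List.take_append_of_le_length hle] at this
      set t' := t.drop s.length with ht'
      have htdec : t = s ++ t' := by rw [hst, ht']; exact (List.take_append_drop _ t).symm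
      have hc' : s ++ t' = t' ++ s := by
        have : s ++ (s ++ t') = s ++ (t' ++ s) := by
          calc s ++ (s ++ t') = s ++ t ++ [] := by simp [htdec]
            _ = t ++ s := by simp [hc]
            _ = s ++ (t' ++ s) := by rw [htdec]; simp
        exact List.append_cancel_left this
      have hlt' : s.length + t'.length < N := by
        have : t'.length = t.length - s.length := by simp [ht']
        omega
      obtain ⟨u, k, m, hsu, htu⟩ := ih _ hlt' s t' (le_refl _) hc'
      exact ⟨u, k, k + m, hsu, by rw [htdec, hsu, htu, ← power_add]⟩
    · -- t is a prefix of s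
      have hle : t.length ≤ s.length := hlt.le
      have hst : t = s.take t.length := by
        have := congrArg (List.take t.length) hc.symm
        rwa [List.take_left, List.take_append_of_le_length hle] at this
      set s' := s.drop t.length with hs'
      have hsdec : s = t ++ s' := by rw [hst, hs']; exact (List.take_append_drop _ s).symm
      have hc' : t ++ s' = s' ++ t := by
        have : t ++ (t ++ s') = t ++ (s' ++ t) := by
          calc t ++ (t ++ s') = t ++ s ++ [] := by simp [hsdec]
            _ = s ++ t := by simp [hc]
            _ = t ++ (s' ++ t) := by rw [hsdec]; simp
        exact List.append_cancel_left this
      have hlt'' : t.length + s'.length < N := by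
        have : s'.length = s.length - t.length := by simp [hs']
        omega
      obtain ⟨u, k, m, htu, hsu⟩ := ih _ hlt'' t s' (le_refl _) hc'
      exact ⟨u, k + m, k, by rw [hsdec, htu, hsu, ← power_add], htu⟩

/-- A primitive word is fixed by no nontrivial rotation. -/
lemma prim_rotate_fix {l : List α} (hp : Primitive l) (hne : l ≠ [])
    {d : ℕ} (hd : d < l.length) (h : l.rotate d = l) : d = 0 := by
  by_contra hd0
  have hd0' : 0 < d := Nat.pos_of_ne_zero hd0
  set t := l.take d with htdef
  set r := l.drop d with hrdef
  have h1 : t ++ r = l := List.take_append_drop d l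
  have h2 : r ++ t = l := by
    rw [htdef, hrdef, ← List.rotate_eq_drop_append_take hd.le, h]
  have hcomm : t ++ r = r ++ t := h1.trans h2.symm
  obtain ⟨u, k, m, htu, hru⟩ := comm_pow (t.length + r.length) t r (le_refl _) hcomm
  have htne : t ≠ [] := by
    rw [htdef]; simp only [ne_eq, List.take_eq_nil_iff]; push_neg
    exact ⟨hd0, hne⟩
  have hrne : r ≠ [] := by
    rw [hrdef]; simp only [ne_eq, List.drop_eq_nil_iff]; omega
  have hk : 0 < k := by
    rcases Nat.eq_zero_or_pos k with rfl | h; · simp [htu] at htne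
    exact h
  have hm : 0 < m := by
    rcases Nat.eq_zero_or_pos m with rfl | h; · simp [hru] at hrne
    exact h
  have hl : l = power u (k + m) := by rw [power_add, ← htu, ← hru, h1]
  have hu : u = l := hp u (k + m) (by omega) hl
  have : l.length = (k + m) * l.length := by
    conv_lhs => rw [hl, length_power, hu]
  have hlp : 0 < l.length := List.length_pos_iff.mpr hne
  nlinarith

lemma cyc_power (d t : List α) : ∀ k, d ++ power (t ++ d) k = power (d ++ t) k ++ d := by
  intro k
  induction k with
  | zero => simp
  | succ k ih =>
    simp only [power_succ, List.append_assoc]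
    rw [ih]

lemma power_eq_nil (k : ℕ) : power ([] : List α) k = [] := by
  have := length_power ([] : List α) k
  simpa using List.length_eq_zero_iff.mp (by simpa using this)

lemma rotate_power_len (u : List α) (k : ℕ) :
    (power u k).rotate u.length = power u k := by
  rcases Nat.eq_zero_or_pos k with rfl | hk
  · simp
  obtain ⟨k, rfl⟩ : ∃ k', k = k' + 1 := ⟨k - 1, by omega⟩
  rw [power_succ]
  have hle : u.length ≤ (u ++ power u k).length := by simp
  rw [List.rotate_eq_drop_append_take hle, List.drop_left, List.take_left, ← power_succ',
    power_succ]

lemma rotate_power_len_mul (u : List α) (k q : ℕ) :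
    (power u k).rotate (u.length * q) = power u k := by
  induction q with
  | zero => simp
  | succ q ih =>
    rw [Nat.mul_succ, ← List.rotate_rotate, ih, rotate_power_len]

/-- Rotating a power gives the power of the rotation. -/
lemma rotate_power (u : List α) (k c : ℕ) :
    (power u k).rotate c = power (u.rotate c) k := by
  rcases eq_or_ne u [] with rfl | hu
  · simp [power_eq_nil]
  have hm : 0 < u.length := List.length_pos_iff.mpr hu
  rcases Nat.eq_zero_or_pos k with rfl | hk
  · simp
  -- reduce to c < u.length
  have key : ∀ r < u.length, (power u k).rotate r = power (u.rotate r) k := by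
    intro r hr
    obtain ⟨k', rfl⟩ : ∃ k', k = k' + 1 := ⟨k - 1, by omega⟩
    have h1 : (power u (k' + 1)).rotate r
        = (u.drop r ++ power u k') ++ u.take r := by
      rw [List.rotate_eq_drop_append_take (by rw [length_power]; nlinarith)]
      rw [power_succ, List.drop_append_of_le_length hr.le,
        List.take_append_of_le_length hr.le]
    have h2 : (power u (k' + 1)).rotate r ++ u.drop r
        = power (u.rotate r) (k' + 1) ++ u.drop r := by
      rw [h1, List.rotate_eq_drop_append_take hr.le]
      calc u.drop r ++ power u k' ++ u.take r ++ u.drop r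
          = u.drop r ++ power u k' ++ (u.take r ++ u.drop r) := by simp
        _ = u.drop r ++ (power u k' ++ u) := by rw [List.take_append_drop]; simp
        _ = u.drop r ++ power u (k' + 1) := by rw [power_succ']
        _ = u.drop r ++ power (u.take r ++ u.drop r) (k' + 1) := by
            rw [List.take_append_drop]
        _ = power (u.drop r ++ u.take r) (k' + 1) ++ u.drop r := cyc_power _ _ _
    exact List.append_cancel_right h2
  have hdec : c = u.length * (c / u.length) + c % u.length := (Nat.div_add_mod c u.length).symm
  calc (power u k).rotate c
      = (power u k).rotate (u.length * (c / u.length) + c % u.length) := by rw [← hdec]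
    _ = ((power u k).rotate (u.length * (c / u.length))).rotate (c % u.length) := by
        rw [List.rotate_rotate]
    _ = (power u k).rotate (c % u.length) := by rw [rotate_power_len_mul]
    _ = power (u.rotate (c % u.length)) k := key _ (Nat.mod_lt _ hm)
    _ = power (u.rotate c) k := by rw [List.rotate_mod]

/-- A rotation of a primitive word is primitive. -/
lemma primitive_rotate {l : List α} (hp : Primitive l) (hne : l ≠ []) (c : ℕ) :
    Primitive (l.rotate c) := by
  intro u k hk hpow
  have hn : 0 < l.length := List.length_pos_iff.mpr hne
  set n := l.length with hndef
  have hback : l = (l.rotate c).rotate (n - c % n) := by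
    rw [List.rotate_rotate]
    have : c + (n - c % n) = n * (c / n + 1) := by
      have := Nat.div_add_mod c n
      have := Nat.mod_lt c hn
      ring_nf
      omega
    rw [this, List.rotate_length_mul]
  have hl : l = power (u.rotate (n - c % n)) k := by
    rw [hback, hpow, rotate_power]
  have heq : u.rotate (n - c % n) = l := hp _ k hk hl
  have hulen : u.length = n := by
    have := congrArg List.length heq
    simpa using this
  have hklen : n = k * u.length := by
    have := congrArg List.length hpow
    rw [length_power] at this
    simpa [hndef] using this
  rw [hulen] at hklen
  have hk1 : k = 1 := by nlinarith
  rw [hk1, power_one] at hpow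
  exact hpow.symm

/- ## foldr min lemmas -/

lemma foldr_min_le_s7 [LinearOrder α] (b : List α) (L : List (List α)) :
    L.foldr min b ≤ b ∧ ∀ a ∈ L, L.foldr min b ≤ a := by
  induction L with
  | nil => simp
  | cons x L ih =>
    constructor
    · exact le_trans (min_le_right _ _) ih.1
    · intro a ha
      rcases List.mem_cons.mp ha with rfl | ha
      · exact min_le_left _ _
      · exact le_trans (min_le_right _ _) (ih.2 a ha)

lemma foldr_min_mem [LinearOrder α] (b : List α) (L : List (List α)) :
    L.foldr min b = b ∨ L.foldr min b ∈ L := by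
  induction L with
  | nil => simp
  | cons x L ih =>
    simp only [List.foldr_cons]
    rcases le_total x (L.foldr min b) with h | h
    · right; simp [min_eq_left h]
    · rcases ih with h' | h'
      · left; rw [min_eq_right h, h']
      · right; rw [min_eq_right h]; exact List.mem_cons_of_mem _ h'

/- ## minrot lemmas -/

lemma minrot_le_rotate [LinearOrder α] (w : List α) (c : ℕ) : minrot w ≤ w.rotate c := by
  rcases eq_or_ne w [] with rfl | h
  · simp [minrot]
  have hn : 0 < w.length := List.length_pos_iff.mpr h
  have hmem : rot w (c % w.length) ∈ (List.range w.length).map (rot w) :=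
    List.mem_map_of_mem (List.mem_range.mpr (Nat.mod_lt _ hn))
  have := (foldr_min_le_s7 w ((List.range w.length).map (rot w))).2 _ hmem
  rwa [rot_eq_rotate, List.rotate_mod] at this

lemma minrot_def [LinearOrder α] (w : List α) :
    minrot w = ((List.range w.length).map (rot w)).foldr min w := rfl

lemma minrot_exists_rotate [LinearOrder α] (w : List α) : ∃ c, minrot w = w.rotate c := by
  rcases foldr_min_mem w ((List.range w.length).map (rot w)) with h | h
  · exact ⟨0, by rw [minrot_def, h, List.rotate_zero]⟩
  · obtain ⟨i, _, hi⟩ := List.mem_map.mp h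
    exact ⟨i, by rw [minrot_def, ← hi, rot_eq_rotate]⟩

lemma length_minrot [LinearOrder α] (w : List α) : (minrot w).length = w.length := by
  obtain ⟨c, hc⟩ := minrot_exists_rotate w
  rw [hc, List.length_rotate]

lemma minrot_rotate [LinearOrder α] (w : List α) (c : ℕ) : minrot (w.rotate c) = minrot w := by
  rcases eq_or_ne w [] with rfl | h
  · simp
  have hn : 0 < w.length := List.length_pos_iff.mpr h
  apply le_antisymm
  · obtain ⟨c₁, hc₁⟩ := minrot_exists_rotate w
    have hd : (w.rotate c).rotate ((w.length - c % w.length) + c₁) = w.rotate c₁ := by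
      rw [List.rotate_rotate]
      have h1 : c + (w.length - c % w.length + c₁)
          = w.length * (c / w.length + 1) + c₁ := by
        have := Nat.div_add_mod c w.length
        have := Nat.mod_lt c hn
        ring_nf
        omega
      rw [h1, ← List.rotate_rotate, List.rotate_length_mul]
    calc minrot (w.rotate c) ≤ (w.rotate c).rotate ((w.length - c % w.length) + c₁) :=
          minrot_le_rotate _ _
      _ = w.rotate c₁ := hd
      _ = minrot w := hc₁.symm
  · obtain ⟨c₂, hc₂⟩ := minrot_exists_rotate (w.rotate c)
    calc minrot w ≤ w.rotate (c + c₂) := minrot_le_rotate _ _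
      _ = (w.rotate c).rotate c₂ := (List.rotate_rotate _ _ _).symm
      _ = minrot (w.rotate c) := hc₂.symm


lemma rotate_inj_of_primitive {l : List α} (hp : Primitive l) (hne : l ≠ [])
    {a b : ℕ} (ha : a < l.length) (hb : b < l.length) (h : l.rotate a = l.rotate b) :
    a = b := by
  rcases lt_trichotomy a b with hab | hab | hab
  · exfalso
    have hfix : l.rotate (a + (l.length - b)) = l := by
      rw [← List.rotate_rotate, h, List.rotate_rotate]
      have hb' : b + (l.length - b) = l.length := by omega
      rw [hb', List.rotate_length]
    have := prim_rotate_fix hp hne (by omega : a + (l.length - b) < l.length) hfix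
    omega
  · exact hab
  · exfalso
    have hfix : l.rotate (b + (l.length - a)) = l := by
      rw [← List.rotate_rotate, ← h, List.rotate_rotate]
      have ha' : a + (l.length - a) = l.length := by omega
      rw [ha', List.rotate_length]
    have := prim_rotate_fix hp hne (by omega : b + (l.length - a) < l.length) hfix
    omega


/-- For every word `w` of length `n ≥ 1`, `n · Lynd(w)` equals the number of primitive
words `x` of length `n` with `minrot(x) ≤ w`. -/
theorem stmt_7 [LinearOrder α] [Fintype α] [Nonempty α]
    (w : List α) (n : ℕ) (hn : 1 ≤ n) (hw : w.length = n) :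
    n * {l : List α | IsLyndon l ∧ l.length = n ∧ l ≤ w}.ncard =
      {x : List α | x.length = n ∧ Primitive x ∧ minrot x ≤ w}.ncard := by
  classical
  set S := {l : List α | IsLyndon l ∧ l.length = n ∧ l ≤ w} with hS
  set T := {x : List α | x.length = n ∧ Primitive x ∧ minrot x ≤ w} with hT
  have hmaps : ∀ (c : Fin n) (l : S), (l : List α).rotate c ∈ T := by
    rintro c ⟨l, ⟨hne, hprim, hself⟩, hlen, hle⟩
    refine ⟨by rw [List.length_rotate]; exact hlen, primitive_rotate hprim hne c, ?_⟩
    rw [minrot_rotate, hself]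
    exact hle
  let f : Fin n × S → T := fun p => ⟨(p.2 : List α).rotate p.1, hmaps p.1 p.2⟩
  have hbij : Function.Bijective f := by
    constructor
    · rintro ⟨c, l, hl⟩ ⟨c', l', hl'⟩ heq
      have heq' : l.rotate c = l'.rotate c' := congrArg Subtype.val heq
      have hll' : l = l' := by
        calc l = minrot l := hl.1.2.2.symm
          _ = minrot (l.rotate c) := (minrot_rotate l c).symm
          _ = minrot (l'.rotate c') := by rw [heq']
          _ = minrot l' := minrot_rotate l' c'
          _ = l' := hl'.1.2.2
      subst hll'
      have hcc : (c : ℕ) = c' := by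
        refine rotate_inj_of_primitive hl.1.2.1 hl.1.1 ?_ ?_ heq' <;>
          rw [hl.2.1] <;> exact Fin.is_lt _
      have : c = c' := Fin.ext hcc
      subst this
      rfl
    · rintro ⟨x, hxlen, hxprim, hxle⟩
      obtain ⟨c₀, hc₀⟩ := minrot_exists_rotate x
      have hxne : x ≠ [] := by
        intro h; rw [h] at hxlen; simp at hxlen; omega
      have hln : (minrot x).length = n := by rw [length_minrot, hxlen]
      have hlne : minrot x ≠ [] := by
        intro h; rw [h] at hln; simp at hln; omega
      have hlprim : Primitive (minrot x) := by
        rw [hc₀]; exact primitive_rotate hxprim hxne c₀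
      have hlself : SelfMinimal (minrot x) := by
        show minrot (minrot x) = minrot x
        conv_lhs => rw [hc₀]
        rw [minrot_rotate]
      have hlS : minrot x ∈ S := ⟨⟨hlne, hlprim, hlself⟩, hln, hxle⟩
      refine ⟨⟨⟨(n - c₀ % n) % n, Nat.mod_lt _ (by omega)⟩, ⟨minrot x, hlS⟩⟩, ?_⟩
      apply Subtype.ext
      show (minrot x).rotate ((n - c₀ % n) % n) = x
      rw [show ((n - c₀ % n) % n) = ((n - c₀ % n) % (minrot x).length) by rw [hln],
        List.rotate_mod, hc₀, List.rotate_rotate]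
      have h2 : c₀ + (n - c₀ % n) = n * (c₀ / n + 1) := by
        have h3 := Nat.div_add_mod c₀ n
        have h4 : c₀ % n < n := Nat.mod_lt _ (by omega)
        ring_nf
        omega
      rw [h2, ← hxlen, List.rotate_length_mul]
  calc n * S.ncard = Nat.card (Fin n) * Nat.card S := by
        rw [Nat.card_eq_fintype_card, Fintype.card_fin, Nat.card_coe_set_eq]
    _ = Nat.card (Fin n × S) := (Nat.card_prod _ _).symm
    _ = Nat.card T := Nat.card_congr (Equiv.ofBijective f hbij)
    _ = T.ncard := Nat.card_coe_set_eq T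



end Lyndon
end

section
/- Let w be a self-minimal word of length n ≥ 1 over Σ. For k ≥ 0 let T_k be the number of words u of length k over Σ such that u ∉ L(w) and no nonempty suffix of u is a prefix of w, and for 1 ≤ i ≤ n let a_i = |{c ∈ Σ : c > w[i]}|. Then T_0 = 1, and for every k ≥ 1, T_k = Σ_{i=1}^{min(k, n)} a_i · T_{k-i}. -/
namespace Lyndon

variable {α : Type*}

def Sset [LinearOrder α] (w : List α) (m : ℕ) : Set (List α) :=
  {u | u.length = m ∧ ¬ InL w u ∧ ∀ s : List α, s ≠ [] → s <:+ u → ¬ s <+: w}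

lemma foldr_min_le_mem {β : Type*} [LinearOrder β] :
    ∀ (l : List β) (b x : β), x ∈ l → l.foldr min b ≤ x := by
  intro l
  induction l with
  | nil => intro b x hx; simp at hx
  | cons a l ih =>
    intro b x hx
    rcases List.mem_cons.mp hx with h | h
    · subst h; exact min_le_left _ _
    · exact le_trans (min_le_right _ _) (ih b x h)

lemma le_rot [LinearOrder α] {w : List α} (hsm : SelfMinimal w) {q : ℕ}
    (hq : q < w.length) : w ≤ rot w q := by
  have : rot w q ∈ (List.range w.length).map (rot w) :=
    List.mem_map_of_mem (List.mem_range.mpr hq)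
  calc w = minrot w := hsm.symm
  _ ≤ rot w q := foldr_min_le_mem _ _ _ this

lemma lex_append [LinearOrder α] (t : List α) {b b' : α} (h : b' < b) (r₁ r₂ : List α) :
    t ++ b' :: r₁ < t ++ b :: r₂ := by
  induction t with
  | nil => exact List.Lex.rel h
  | cons a t ih => exact List.Lex.cons ih

lemma get_le_of_le [LinearOrder α] {x y : List α} (hxy : x ≤ y) {j : ℕ}
    (hjx : j < x.length) (hjy : j < y.length) (htake : x.take j = y.take j) :
    x[j] ≤ y[j] := by
  by_contra hlt
  push_neg at hlt
  have hx : x = x.take j ++ x[j] :: x.drop (j+1) := by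
    rw [← List.drop_eq_getElem_cons hjx, List.take_append_drop]
  have hy : y = y.take j ++ y[j] :: y.drop (j+1) := by
    rw [← List.drop_eq_getElem_cons hjy, List.take_append_drop]
  have : y < x := by
    rw [hx, hy, htake]; exact lex_append _ hlt _ _
  exact absurd hxy (not_le_of_gt this)

/-- Core self-minimality lemma: if a prefix of `w` of length `j` occurs in `w`
at position `q` (with the next position still inside `w`), then the next letter
there is at least `w[j]`. -/
lemma key [LinearOrder α] {w : List α} (hsm : SelfMinimal w) {q j : ℕ}
    (h : q + j < w.length) (hocc : (w.drop q).take j = w.take j) :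
    w[j]'(by omega) ≤ w[q+j]'h := by
  have hq : q < w.length := by omega
  have hrl : (rot w q).length = w.length := by
    simp only [rot, List.length_append, List.length_drop, List.length_take]
    omega
  have hmod : q % w.length = q := Nat.mod_eq_of_lt hq
  have hdl : (w.drop q).length = w.length - q := List.length_drop
  have htake : (rot w q).take j = w.take j := by
    rw [rot, hmod, List.take_append_of_le_length (by omega)]
    exact hocc
  have hget : (rot w q)[j]'(by omega) = w[q+j]'h := by
    simp only [rot, hmod]
    rw [List.getElem_append_left (by simpa using by omega : j < (w.drop q).length)]
    simp [Nat.add_comm]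
  calc w[j]'(by omega) ≤ (rot w q)[j]'(by omega) :=
        get_le_of_le (le_rot hsm hq) _ _ htake.symm
  _ = w[q+j]'h := hget

lemma branch_unique {u w : List α} {j j' : ℕ}
    (hj : j < u.length) (hjw : j < w.length) (hj' : j' < u.length) (hj'w : j' < w.length)
    (ht : u.take j = w.take j) (hne : u[j] ≠ w[j])
    (ht' : u.take j' = w.take j') (hne' : u[j'] ≠ w[j']) : j = j' := by
  by_contra h
  rcases Nat.lt_or_ge j j' with hlt | hge
  · apply hne
    have := congrArg (fun l => l[j]?) ht'
    simp only [List.getElem?_take] at this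
    simpa [hlt, List.getElem?_eq_getElem, hj, hjw] using this
  · have hlt : j' < j := by omega
    apply hne'
    have := congrArg (fun l => l[j']?) ht
    simp only [List.getElem?_take] at this
    simpa [hlt, List.getElem?_eq_getElem, hj', hj'w] using this


lemma getElem_idx_congr (l : List α) {i i' : ℕ} (h : i = i') (hi : i < l.length) :
    l[i]'hi = l[i']'(h ▸ hi) := by subst h; rfl

lemma mem_S_cons [LinearOrder α] {w : List α} (hsm : SelfMinimal w) {j : ℕ}
    (hj : j < w.length) {c : α} (hc : w[j] < c) {v : List α} {m : ℕ}
    (hv : v ∈ Sset w m) : (w.take j ++ c :: v) ∈ Sset w (j + 1 + m) := by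
  obtain ⟨hvlen, hvL, hvsuf⟩ := hv
  set u := w.take j ++ c :: v with hu
  have hwtl : (w.take j).length = j := List.length_take_of_le (by omega)
  have hulen : u.length = j + 1 + m := by
    simp [hu, hwtl, hvlen]; omega
  have hutake : u.take j = w.take j := by
    rw [hu, List.take_append_of_le_length (by omega), List.take_take, min_self]
  have huget : ∀ t (ht : t < j), u[t]'(by omega) = w[t]'(by omega) := by
    intro t ht
    simp only [hu]
    rw [List.getElem_append_left (by omega), List.getElem_take]
  have hugetj : u[j]'(by omega) = c := by
    simp only [hu]
    rw [List.getElem_append_right (by omega)]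
    simp [hwtl]
  have factA : ∀ p m', p + m' ≤ j → (u.drop p).take m' = (w.drop p).take m' := by
    intro p m' hpm
    have h1 : (u.drop p).take m' = ((u.drop p).take (j - p)).take m' := by
      rw [List.take_take, min_eq_left (by omega)]
    have h2 : ((u.drop p).take (j - p)) = ((w.drop p).take (j - p)) := by
      have := congrArg (List.drop p) hutake
      rwa [List.drop_take, List.drop_take] at this
    rw [h1, h2, List.take_take, min_eq_left (by omega)]
  refine ⟨hulen, ?_, ?_⟩
  · -- ¬ InL w u
    rintro ⟨y, hy, hinf⟩
    obtain ⟨sl, tl, hslt⟩ := hinf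
    set p := sl.length with hp
    have hydrop : y ++ tl = u.drop p := by
      rw [← hslt, List.drop_append]
      simp [hp]
    have hytake : y = (u.drop p).take y.length := by
      rw [← hydrop, List.take_append_of_le_length le_rfl, List.take_length]
    have hylen : p + y.length ≤ u.length := by
      have := congrArg List.length hslt
      simp at this; omega
    have hyget : ∀ t (ht : t < y.length), y[t]'ht = u[p+t]'(by omega) := by
      intro t ht
      rw [List.getElem_of_eq hytake ht, List.getElem_take, List.getElem_drop]
    have hytakes : ∀ m', m' ≤ y.length → y.take m' = (u.drop p).take m' := by
      intro m' hm'
      conv_lhs => rw [hytake]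
      rw [List.take_take, min_eq_left hm']
    by_cases hpj : j + 1 ≤ p
    · -- y is a factor of v
      apply hvL
      refine ⟨y, hy, ?_⟩
      have hudv : u.drop p = v.drop (p - (j+1)) := by
        rw [hu, ← List.singleton_append, ← List.append_assoc,
          List.drop_append]
        have hlen2 : (w.take j ++ [c]).length = j + 1 := by simp [hwtl]
        rw [List.drop_eq_nil_of_le (by rw [hlen2]; omega), hlen2, List.nil_append]
      have hpref : y <+: v.drop (p - (j+1)) := by
        rw [← hudv, hytake]; exact List.take_prefix _ _
      exact hpref.isInfix.trans (List.drop_suffix _ _).isInfix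
    · push_neg at hpj
      have hpj : p ≤ j := by omega
      rcases hy with ⟨⟨ι, hι⟩, s, hs, hy⟩ | hy
      · -- y = w.take ι ++ [s] with s < w[ι]
        simp only [List.get_eq_getElem] at hs
        simp only [] at hy
        have htι : (w.take ι).length = ι := List.length_take_of_le (le_of_lt hι)
        have hylen2 : y.length = ι + 1 := by rw [hy]; simp [htι]
        have hys : y[ι]'(by omega) = s := by
          rw [List.getElem_of_eq hy (by omega),
            List.getElem_append_right (by omega)]
          simp [htι]
        rcases Nat.lt_or_ge (p + ι) j with hcase | hcase
        · -- the factor lies entirely within w.take j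
          have hocc : (w.drop p).take ι = w.take ι := by
            rw [← factA p ι (by omega), ← hytakes ι (by omega), hy,
              List.take_append_of_le_length (by omega), List.take_take, min_self]
          have hk := key hsm (q := p) (j := ι) (by omega) hocc
          have e : s = w[p+ι]'(by omega) :=
            (hys.symm.trans (hyget ι (by omega))).trans (huget (p+ι) (by omega))
          have : w[p+ι]'(by omega) < w[ι]'hι := e ▸ hs
          exact absurd hk (not_le_of_gt this)
        · -- the factor reaches position j
          have hm0 : j - p ≤ ι := by omega
          set m0 := j - p with hm0d
          have hpm0 : p + m0 = j := by omega
          have hym0 : m0 < y.length := by omega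
          have hytakem0 : y.take m0 = w.take m0 := by
            rw [hy, List.take_append_of_le_length (by omega),
              List.take_take, min_eq_left hm0]
          have hocc : (w.drop p).take m0 = w.take m0 := by
            rw [← factA p m0 (by omega), ← hytakes m0 (by omega), hytakem0]
          have hk := key hsm (q := p) (j := m0) (by omega) hocc
          have hk' : w[m0]'(by omega) ≤ w[j]'hj :=
            le_of_le_of_eq hk (getElem_idx_congr w hpm0 (by omega))
          have h1 : y[m0]'hym0 = c :=
            (hyget m0 hym0).trans ((getElem_idx_congr u hpm0 (by omega)).trans hugetj)
          rcases Nat.lt_or_ge m0 ι with hlt | hge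
          · have h2 : y[m0]'hym0 = w[m0]'(by omega) := by
              rw [List.getElem_of_eq hy (by omega),
                List.getElem_append_left (by omega), List.getElem_take]
            exact absurd hc (not_lt_of_ge (le_of_eq_of_le (h1.symm.trans h2) hk'))
          · have hge' : m0 = ι := by omega
            have h2 : y[m0]'hym0 = s :=
              (getElem_idx_congr y hge' hym0).trans hys
            have : c < c := by
              calc c = s := h1.symm.trans h2
              _ < w[ι]'hι := hs
              _ = w[m0]'(by omega) := (getElem_idx_congr w hge' (by omega)).symm
              _ ≤ w[j]'hj := hk'
              _ < c := hc
            exact absurd this (lt_irrefl c)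
      · -- y = w
        have hylen2 : y.length = w.length := by rw [hy]
        set m0 := j - p with hm0d
        have hpm0 : p + m0 = j := by omega
        have hym0 : m0 < y.length := by omega
        have hocc : (w.drop p).take m0 = w.take m0 := by
          rw [← factA p m0 (by omega), ← hytakes m0 (by omega), hy]
        have hk := key hsm (q := p) (j := m0) (by omega) hocc
        have hk' : w[m0]'(by omega) ≤ w[j]'hj :=
          le_of_le_of_eq hk (getElem_idx_congr w hpm0 (by omega))
        have h1 : y[m0]'hym0 = c :=
          (hyget m0 hym0).trans ((getElem_idx_congr u hpm0 (by omega)).trans hugetj)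
        have h2 : y[m0]'hym0 = w[m0]'(by omega) := List.getElem_of_eq hy hym0
        exact absurd hc (not_lt_of_ge (le_of_eq_of_le (h1.symm.trans h2) hk'))
  · -- suffix condition
    intro s hne hsuf hpre
    obtain ⟨r, hr⟩ := hsuf
    set p := r.length with hp
    have hsdrop : s = u.drop p := by
      rw [← hr, List.drop_append]; simp [hp]
    have hslen : p + s.length = u.length := by
      have := congrArg List.length hr; simp at this; omega
    have hslen0 : 0 < s.length := List.length_pos_iff.mpr hne
    by_cases hpj : j + 1 ≤ p
    · apply hvsuf s hne ?_ hpre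
      have hudv : u.drop p = v.drop (p - (j+1)) := by
        rw [hu, ← List.singleton_append, ← List.append_assoc,
          List.drop_append]
        have hlen2 : (w.take j ++ [c]).length = j + 1 := by simp [hwtl]
        rw [List.drop_eq_nil_of_le (by rw [hlen2]; omega), hlen2, List.nil_append]
      rw [hsdrop, hudv]
      exact List.drop_suffix _ _
    · push_neg at hpj
      have hpj : p ≤ j := by omega
      set m0 := j - p with hm0d
      have hpm0 : p + m0 = j := by omega
      have hsm0 : m0 < s.length := by omega
      have hswlen : s.length ≤ w.length := hpre.length_le
      have hsget : ∀ t (ht : t < s.length), s[t]'ht = u[p+t]'(by omega) := by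
        intro t ht
        rw [List.getElem_of_eq hsdrop ht, List.getElem_drop]
      have hstakew : s.take m0 = w.take m0 := by
        obtain ⟨t2, ht2⟩ := hpre
        rw [← ht2, List.take_append_of_le_length (by omega)]
      have hocc : (w.drop p).take m0 = w.take m0 := by
        rw [← factA p m0 (by omega), ← hstakew, hsdrop]
      have hk := key hsm (q := p) (j := m0) (by omega) hocc
      have hk' : w[m0]'(by omega) ≤ w[j]'hj :=
        le_of_le_of_eq hk (getElem_idx_congr w hpm0 (by omega))
      have h1 : s[m0]'hsm0 = c :=
        (hsget m0 hsm0).trans ((getElem_idx_congr u hpm0 (by omega)).trans hugetj)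
      have h2 : s[m0]'hsm0 = w[m0]'(by omega) := by
        obtain ⟨t2, ht2⟩ := hpre
        have e := List.getElem_of_eq ht2.symm (show m0 < w.length by omega)
        exact (e.trans (List.getElem_append_left hsm0)).symm
      exact absurd hc (not_lt_of_ge (le_of_eq_of_le (h1.symm.trans h2) hk'))


lemma exists_decomp [LinearOrder α] {w : List α} {n k : ℕ} (hn : 1 ≤ n)
    (hw : w.length = n) (hk : 1 ≤ k) {u : List α}
    (hu : u ∈ Sset w k) :
    ∃ j : ℕ, ∃ hjm : j < min k n,
      u.take j = w.take j ∧
      w[j]'(by omega) < u[j]'(by rw [hu.1]; omega) ∧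
      u.drop (j+1) ∈ Sset w (k - (j+1)) := by
  classical
  obtain ⟨hulen, huL, husuf⟩ := hu
  set P : ℕ → Prop := fun m => u.take m = w.take m with hP
  have hP0 : P 0 := by simp [hP]
  set j := Nat.findGreatest P (min k n) with hjdef
  have hPj : P j := Nat.findGreatest_spec (Nat.zero_le _) hP0
  have hjle : j ≤ min k n := Nat.findGreatest_le _
  have hjlt : j < min k n := by
    rcases Nat.lt_or_ge j (min k n) with h | h
    · exact h
    · exfalso
      have hjeq : j = min k n := le_antisymm hjle h
      rcases Nat.le_total k n with hkn | hnk
      · have : j = k := by omega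
        rw [this] at hPj
        have hPu : u.take k = u := List.take_of_length_le (by omega)
        have : u <+: w := by
          rw [← hPu, hPj]; exact List.take_prefix _ _
        exact husuf u (by intro h0; rw [h0] at hulen; simp at hulen; omega)
          List.suffix_rfl this
      · have : j = n := by omega
        rw [this] at hPj
        have hwn : w.take n = w := List.take_of_length_le (by omega)
        apply huL
        refine ⟨w, Or.inr rfl, ?_⟩
        have : w <+: u := by rw [← hwn, ← hPj]; exact List.take_prefix _ _
        exact this.isInfix
  have hnotP : ¬ P (j+1) :=
    Nat.findGreatest_is_greatest (n := min k n) (k := j+1) (by omega) (by omega)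
  have hjk : j < k := by omega
  have hjn : j < n := by omega
  have hjwl : j < w.length := by omega
  have hjul : j < u.length := by omega
  -- the letters differ at position j
  have hne : u[j]'hjul ≠ w[j]'hjwl := by
    intro he
    apply hnotP
    simp only [hP]
    rw [List.take_succ, List.take_succ, hPj]
    congr 1
    rw [List.getElem?_eq_getElem hjul, List.getElem?_eq_getElem hjwl, he]
  have hgt : w[j]'hjwl < u[j]'hjul := by
    rcases lt_trichotomy (u[j]'hjul) (w[j]'hjwl) with h | h | h
    · exfalso
      apply huL
      refine ⟨w.take j ++ [u[j]'hjul], Or.inl ⟨⟨j, hjwl⟩, u[j]'hjul, h, rfl⟩, ?_⟩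
      have hpre : w.take j ++ [u[j]'hjul] <+: u := by
        have : u.take (j+1) = w.take j ++ [u[j]'hjul] := by
          rw [List.take_succ, hPj, List.getElem?_eq_getElem hjul]
          rfl
        rw [← this]; exact List.take_prefix _ _
      exact hpre.isInfix
    · exact absurd h hne
    · exact h
  refine ⟨j, by omega, hPj, hgt, ?_, ?_, ?_⟩
  · rw [List.length_drop, hulen]
  · intro ⟨y, hy, hinf⟩
    exact huL ⟨y, hy, hinf.trans (List.drop_suffix _ _).isInfix⟩
  · intro s hsne hssuf hspre
    exact husuf s hsne (hssuf.trans (List.drop_suffix _ _)) hspre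

/-- For self-minimal `w` of length `n ≥ 1`, let `T k` be the number of words `u` of
length `k` with `u ∉ L(w)` such that no nonempty suffix of `u` is a prefix of `w`,
and let `a i = |{c : c > w[i]}|` for `1 ≤ i ≤ n`. Then `T 0 = 1` and for `k ≥ 1`,
`T k = Σ_{i=1}^{min(k,n)} a i · T (k - i)`. -/
theorem stmt_15 [LinearOrder α] [Fintype α] [Nonempty α]
    (w : List α) (n : ℕ) (hn : 1 ≤ n) (hw : w.length = n) (hsm : SelfMinimal w)
    (T : ℕ → ℕ)
    (hT : ∀ k : ℕ, T k = {u : List α | u.length = k ∧ ¬ InL w u ∧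
      ∀ s : List α, s ≠ [] → s <:+ u → ¬ s <+: w}.ncard)
    (a : ℕ → ℕ)
    (ha : ∀ i : ℕ, ∀ h1 : 1 ≤ i, ∀ h2 : i ≤ n,
      a i = {c : α | w.get ⟨i - 1, by omega⟩ < c}.ncard) :
    T 0 = 1 ∧ ∀ k : ℕ, 1 ≤ k →
      T k = ∑ i ∈ Finset.Icc 1 (min k n), a i * T (k - i) := by
  classical
  have hfin : ∀ m, (Sset w m).Finite := fun m =>
    (List.finite_length_eq α m).subset (fun u hu => hu.1)
  have hT' : ∀ m, T m = (Sset w m).ncard := hT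
  constructor
  · -- T 0 = 1
    rw [hT' 0]
    have hset : Sset w 0 = {([] : List α)} := by
      ext u
      simp only [Sset, Set.mem_setOf_eq, Set.mem_singleton_iff, List.length_eq_zero_iff]
      constructor
      · rintro ⟨h, _, _⟩; exact h
      · rintro rfl
        refine ⟨rfl, ?_, ?_⟩
        · rintro ⟨y, hy, hinf⟩
          have hynil : y = [] := List.infix_nil.mp hinf
          rcases hy with ⟨i, c, _, hy⟩ | hy
          · rw [hynil] at hy; simp at hy
          · rw [hynil] at hy
            have := congrArg List.length hy
            simp [hw] at this; omega
        · intro s hs hsuf _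
          exact hs (List.suffix_nil.mp hsuf)
    rw [hset, Set.ncard_singleton]
  · intro k hk
    set d : α := Classical.arbitrary α with hd
    have hTm : ∀ m, T m = ((hfin m).toFinset).card := by
      intro m
      rw [hT' m, Set.ncard_eq_toFinset_card _ (hfin m)]
    set g : ℕ → α × List α → List α := fun i p => w.take (i-1) ++ p.1 :: p.2 with hg
    set A : ℕ → Finset α := fun i => Finset.univ.filter (fun c => w.getD (i-1) d < c) with hA
    set P : ℕ → Finset (List α) :=
      fun i => ((A i) ×ˢ (hfin (k - i)).toFinset).image (g i) with hP
    have hginj : ∀ i, Function.Injective (g i) := by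
      intro i p q h
      simp only [hg] at h
      have := List.append_cancel_left h
      rw [List.cons_eq_cons] at this
      exact Prod.ext this.1 this.2
    -- description of members of P i
    have hmemP : ∀ i, i ∈ Finset.Icc 1 (min k n) → ∀ u ∈ P i,
        u.length = k ∧ ∃ h1 : i - 1 < w.length, ∃ h2 : i - 1 < u.length,
          u.take (i-1) = w.take (i-1) ∧ w[i-1]'h1 < u[i-1]'h2 := by
      intro i hi u hu
      rw [Finset.mem_Icc] at hi
      have hin : i ≤ n := le_trans hi.2 (min_le_right _ _)
      have hik : i ≤ k := le_trans hi.2 (min_le_left _ _)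
      obtain ⟨⟨c, v⟩, hmem, rfl⟩ := Finset.mem_image.mp hu
      rw [Finset.mem_product] at hmem
      obtain ⟨hcmem, hvmem⟩ := hmem
      rw [hA] at hcmem
      simp only [Finset.mem_filter, Finset.mem_univ, true_and] at hcmem
      have hvS : v ∈ Sset w (k - i) := (Set.Finite.mem_toFinset _).mp hvmem
      have hwtl : (w.take (i-1)).length = i-1 := List.length_take_of_le (by omega)
      have h1 : i - 1 < w.length := by omega
      have hgu : g i (c, v) = w.take (i-1) ++ c :: v := rfl
      have hlen : (g i (c, v)).length = k := by
        rw [hgu]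
        simp [hwtl, hvS.1]
        omega
      have h2 : i - 1 < (g i (c,v)).length := by omega
      refine ⟨hlen, h1, h2, ?_, ?_⟩
      · rw [hgu, List.take_append_of_le_length (by omega), List.take_take, min_self]
      · have hc' : w[i-1]'h1 < c := by
          rw [← List.getD_eq_getElem w d h1]; exact hcmem
        have : (g i (c,v))[i-1]'h2 = c := by
          simp only [hgu]
          rw [List.getElem_append_right (by omega)]
          simp [hwtl]
        rw [this]
        exact hc'
    -- the cover
    have hcover : (hfin k).toFinset = (Finset.Icc 1 (min k n)).biUnion P := by
      ext u
      rw [Set.Finite.mem_toFinset, Finset.mem_biUnion]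
      constructor
      · intro hu
        obtain ⟨j, hjm, htake, hgt, hdrop⟩ := exists_decomp hn hw hk hu
        have hjul : j < u.length := by rw [hu.1]; omega
        refine ⟨j+1, Finset.mem_Icc.mpr ⟨by omega, by omega⟩, ?_⟩
        rw [hP]
        refine Finset.mem_image.mpr ⟨(u[j]'hjul, u.drop (j+1)), ?_, ?_⟩
        · rw [Finset.mem_product]
          constructor
          · rw [hA]
            simp only [Finset.mem_filter, Finset.mem_univ, true_and]
            rw [show (j+1) - 1 = j from rfl, List.getD_eq_getElem w d (by omega)]
            exact hgt
          · rw [Set.Finite.mem_toFinset]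
            exact hdrop
        · show w.take ((j+1)-1) ++ u[j]'hjul :: u.drop (j+1) = u
          rw [show (j+1) - 1 = j from rfl, ← htake,
            ← List.drop_eq_getElem_cons hjul, List.take_append_drop]
      · rintro ⟨i, hi, hu⟩
        rw [Finset.mem_Icc] at hi
        have hin : i ≤ n := le_trans hi.2 (min_le_right _ _)
        have hik : i ≤ k := le_trans hi.2 (min_le_left _ _)
        obtain ⟨⟨c, v⟩, hmem, rfl⟩ := Finset.mem_image.mp hu
        rw [Finset.mem_product] at hmem
        obtain ⟨hcmem, hvmem⟩ := hmem
        rw [hA] at hcmem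
        simp only [Finset.mem_filter, Finset.mem_univ, true_and] at hcmem
        have hvS : v ∈ Sset w (k - i) := (Set.Finite.mem_toFinset _).mp hvmem
        have h1 : i - 1 < w.length := by omega
        have hc' : w[i-1]'h1 < c := by
          rw [← List.getD_eq_getElem w d h1]; exact hcmem
        have := mem_S_cons hsm h1 hc' hvS
        have heq : (i-1) + 1 + (k - i) = k := by omega
        rw [heq] at this
        exact this
    -- disjointness
    have hdisj : ∀ i ∈ Finset.Icc 1 (min k n), ∀ i' ∈ Finset.Icc 1 (min k n),
        i ≠ i' → Disjoint (P i) (P i') := by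
      intro i hi i' hi' hne
      rw [Finset.disjoint_left]
      intro u hu hu'
      obtain ⟨hlen, h1, h2, htake, hgt⟩ := hmemP i hi u hu
      obtain ⟨hlen', h1', h2', htake', hgt'⟩ := hmemP i' hi' u hu'
      have : i - 1 = i' - 1 :=
        branch_unique h2 h1 h2' h1' htake (ne_of_gt hgt) htake' (ne_of_gt hgt')
      rw [Finset.mem_Icc] at hi hi'
      omega
    -- conclusion
    rw [hTm k, hcover, Finset.card_biUnion hdisj]
    apply Finset.sum_congr rfl
    intro i hi
    rw [Finset.mem_Icc] at hi
    have hin : i ≤ n := le_trans hi.2 (min_le_right _ _)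
    have h1 : i - 1 < w.length := by omega
    rw [hP]
    rw [Finset.card_image_of_injective _ (hginj i), Finset.card_product]
    congr 1
    · -- (A i).card = a i
      rw [ha i hi.1 hin]
      rw [← Set.ncard_coe_finset (A i)]
      congr 1
      ext c
      simp only [hA, Finset.coe_filter, Finset.mem_univ, true_and, Set.mem_setOf_eq,
        List.get_eq_getElem]
      rw [List.getD_eq_getElem w d h1]
    · exact (hTm (k - i)).symm


end Lyndon
end
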